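/- Let V : [0,∞) → ℝ be differentiable with V(t) ≥ 0 for all t, and suppose there exist constants K > 0 and α ∈ (0,1) such that V′(t) ≤ −K · V(t)^α for all t ≥ 0. Then V(t) = 0 for all t ≥ V(0)^{1−α} / (K (1−α)). -/

import Mathlib

/-- **finite-time stability.** Let `V : [0,∞) → ℝ` be differentiable
and nonnegative, and suppose there are `K > 0` and `α ∈ (0,1)` with
`V'(t) ≤ -K V(t)^α` for all `t ≥ 0` (real power). Then `V(t) = 0` for all
`t ≥ V(0)^{1-α} / (K (1-α))`. -/
theorem finite_time_settling
    (V V' : ℝ → ℝ) (K α : ℝ) (hK : 0 < K) (hα : α ∈ Set.Ioo (0 : ℝ) 1)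
    (hVnn : ∀ t ∈ Set.Ici (0 : ℝ), 0 ≤ V t)
    (hV : ∀ t ∈ Set.Ici (0 : ℝ), HasDerivWithinAt V (V' t) (Set.Ici 0) t)
    (hV' : ∀ t ∈ Set.Ici (0 : ℝ), V' t ≤ -K * V t ^ α) :
    ∀ t : ℝ, V 0 ^ (1 - α) / (K * (1 - α)) ≤ t → V t = 0 := by
  obtain ⟨hα0, hα1⟩ := hα
  have h1α : 0 < 1 - α := by linarith
  have hK1 : 0 < K * (1 - α) := mul_pos hK h1α
  intro t ht
  have hV00 : 0 ≤ V 0 := hVnn 0 (Set.mem_Ici.mpr le_rfl)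
  have hT0 : 0 ≤ V 0 ^ (1 - α) / (K * (1 - α)) :=
    div_nonneg (Real.rpow_nonneg hV00 _) hK1.le
  have ht0 : (0 : ℝ) ≤ t := le_trans hT0 ht
  -- V is antitone on [0, ∞)
  have hVcont : ContinuousOn V (Set.Ici 0) := fun x hx => (hV x hx).continuousWithinAt
  have hanti : AntitoneOn V (Set.Ici 0) := by
    apply antitoneOn_of_hasDerivWithinAt_nonpos (convex_Ici 0) hVcont
    · intro x hx
      rw [interior_Ici] at hx
      exact ((hV x (Set.mem_Ici.mpr (le_of_lt (Set.mem_Ioi.mp hx)))).mono (by rw [interior_Ici]; exact Set.Ioi_subset_Ici_self))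
    · intro x hx
      rw [interior_Ici] at hx
      have := hV' x (Set.mem_Ici.mpr (le_of_lt (Set.mem_Ioi.mp hx)))
      have h2 : 0 ≤ V x ^ α := Real.rpow_nonneg (hVnn x (Set.mem_Ici.mpr (le_of_lt (Set.mem_Ioi.mp hx)))) _
      nlinarith
  rcases (hVnn t ht0).lt_or_eq with hpos | h
  · -- V t > 0 : derive a contradiction
    exfalso
    have hposIcc : ∀ s ∈ Set.Icc (0 : ℝ) t, 0 < V s := fun s hs =>
      lt_of_lt_of_le hpos (hanti hs.1 ht0 hs.2)
    -- g s = V s ^ (1-α) + K (1-α) s is antitone on [0, t]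
    set g : ℝ → ℝ := fun s => V s ^ (1 - α) + K * (1 - α) * s with hg
    have hganti : AntitoneOn g (Set.Icc 0 t) := by
      apply antitoneOn_of_hasDerivWithinAt_nonpos (convex_Icc 0 t)
        (f' := fun x => V' x * (1 - α) * V x ^ (1 - α - 1) + K * (1 - α))
      · exact ((hVcont.mono Set.Icc_subset_Ici_self).rpow_const
          (fun x _ => Or.inr h1α.le)).add (continuousOn_const.mul continuousOn_id)
      · intro x hx
        rw [interior_Icc] at hx
        have hxIcc : x ∈ Set.Icc (0 : ℝ) t := ⟨hx.1.le, hx.2.le⟩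
        have hVx : 0 < V x := hposIcc x hxIcc
        have hd : HasDerivWithinAt V (V' x) (Set.Ioo 0 t) x :=
          (hV x hx.1.le).mono (fun y hy => hy.1.le)
        have h1 : HasDerivWithinAt (fun y => V y ^ (1 - α))
            (V' x * (1 - α) * V x ^ (1 - α - 1)) (Set.Ioo 0 t) x :=
          hd.rpow_const (Or.inl (ne_of_gt hVx))
        have h2 : HasDerivWithinAt (fun y => K * (1 - α) * y) (K * (1 - α))
            (Set.Ioo 0 t) x := by
          simpa using ((hasDerivAt_id x).const_mul (K * (1 - α))).hasDerivWithinAt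
        rw [interior_Icc]
        exact h1.add h2
      · intro x hx
        rw [interior_Icc] at hx
        have hxIcc : x ∈ Set.Icc (0 : ℝ) t := ⟨hx.1.le, hx.2.le⟩
        have hVx : 0 < V x := hposIcc x hxIcc
        have hle : V' x ≤ -K * V x ^ α := hV' x hx.1.le
        have hpow : 0 < V x ^ (1 - α - 1) := Real.rpow_pos_of_pos hVx _
        have key : V x ^ α * V x ^ (1 - α - 1) = 1 := by
          rw [← Real.rpow_add hVx]
          norm_num
        have : V' x * (1 - α) * V x ^ (1 - α - 1) ≤
            -K * V x ^ α * (1 - α) * V x ^ (1 - α - 1) := by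
          have := mul_le_mul_of_nonneg_right hle (mul_nonneg h1α.le hpow.le)
          nlinarith
        have heq : -K * V x ^ α * (1 - α) * V x ^ (1 - α - 1) = -(K * (1 - α)) := by
          have : K * (1 - α) * (V x ^ α * V x ^ (1 - α - 1)) = K * (1 - α) := by
            rw [key]; ring
          nlinarith [this]
        linarith [heq ▸ this]
    have hmem0 : (0 : ℝ) ∈ Set.Icc (0 : ℝ) t := ⟨le_rfl, ht0⟩
    have hmemt : t ∈ Set.Icc (0 : ℝ) t := ⟨ht0, le_rfl⟩
    have hgt : g t ≤ g 0 := hganti hmem0 hmemt ht0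
    simp only [hg, mul_zero, add_zero] at hgt
    have hKt : V 0 ^ (1 - α) ≤ K * (1 - α) * t := by
      rw [div_le_iff₀ hK1] at ht
      linarith [ht]
    have hVtpos : 0 < V t ^ (1 - α) := Real.rpow_pos_of_pos hpos _
    linarith
  · exact h.symm
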